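/- Exact parameterization: if M_0 is a model of the pure subtheory T_0 and M_A is a terminal object in the category of models of the parameterized theory T_A extending M_0, then the map sending α ∈ M_A(A) to the model M_{A,α} of T defined by M_{A,α}(X) = M_0(X) on types and M_{A,α}(f) = M_A(f')(α, −) on terms is a bijection between M_A(A) and the set of models of T extending M_0. -/
import Mathlib


open CategoryTheory

universe u v

variable {T : Type u} [Category.{v} T]

/-- A model of the parameterized theory `T_A = F_param(T)` extending a fixed
interpretation `obj`/`map0` of the pure subtheory `T_0` (given by the class `W` of pure
morphisms of `T`): a parameter set `P` together with, for each term `f` of `T`, a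
`P`-indexed family of interpretations `act f p`, functorial in `f` for each fixed
parameter `p`, and agreeing with the fixed pure interpretation on pure terms. -/
structure PModel (W : MorphismProperty T) (obj : T → Type u)
    (map0 : ∀ {X Y : T} (f : X ⟶ Y), W f → (obj X → obj Y)) where
  P : Type u
  act : ∀ {X Y : T}, (X ⟶ Y) → P → obj X → obj Y
  act_id : ∀ (X : T) (p : P), act (𝟙 X) p = id
  act_comp : ∀ {X Y Z : T} (f : X ⟶ Y) (g : Y ⟶ Z) (p : P),
    act (f ≫ g) p = act g p ∘ act f p
  act_pure : ∀ {X Y : T} (f : X ⟶ Y) (hf : W f) (p : P), act f p = map0 f hf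

/-- A model of `T` extending the fixed interpretation of the pure subtheory `T_0`. -/
structure TModel (W : MorphismProperty T) (obj : T → Type u)
    (map0 : ∀ {X Y : T} (f : X ⟶ Y), W f → (obj X → obj Y)) where
  act : ∀ {X Y : T}, (X ⟶ Y) → obj X → obj Y
  act_id : ∀ X : T, act (𝟙 X) = id
  act_comp : ∀ {X Y Z : T} (f : X ⟶ Y) (g : Y ⟶ Z), act (f ≫ g) = act g ∘ act f
  act_pure : ∀ {X Y : T} (f : X ⟶ Y) (hf : W f), act f = map0 f hf

/-- Exact parameterization: if `M_A` is a terminal model of the parameterized theory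
`T_A` extending the fixed pure model `M_0` (terminality being expressed by the unique
existence of a morphism of parameterized models into `M_A` from any other one), then
`α ↦ M_{A,α}`, where `M_{A,α}(f) = M_A(f')(α, −)`, is a bijection from the parameter
set `M_A(A)` onto the set of models of `T` extending `M_0`. -/
theorem stmt_11 (W : MorphismProperty T) (obj : T → Type u)
    (map0 : ∀ {X Y : T} (f : X ⟶ Y), W f → (obj X → obj Y))
    (MA : PModel W obj @map0)
    (hterm : ∀ N : PModel W obj @map0, ∃! φ : N.P → MA.P,
      ∀ {X Y : T} (f : X ⟶ Y) (q : N.P), MA.act f (φ q) = N.act f q) :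
    Function.Bijective (fun α : MA.P =>
      ({ act := fun f => MA.act f α
         act_id := fun X => MA.act_id X α
         act_comp := fun f g => MA.act_comp f g α
         act_pure := fun f hf => MA.act_pure f hf α } : TModel W obj @map0)) := by

  classical
  constructor
  · intro a b hab
    have hfg : ∀ {X Y : T} (f : X ⟶ Y), MA.act f a = MA.act f b := by
      intro X Y f
      exact congrArg (fun (N : TModel W obj @map0) => N.act f) hab
    obtain ⟨φ, hφ, huniq⟩ := hterm MA
    have h1 : (fun q : MA.P => if q = a then b else q) = φ := by
      apply huniq
      intro X Y f q
      by_cases h : q = a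
      · simp [h, hfg f]
      · simp [h]
    have h2 : (id : MA.P → MA.P) = φ := by
      apply huniq
      intro X Y f q
      rfl
    have := congrFun (h1.trans h2.symm) a
    simpa using this.symm
  · intro N0
    let N : PModel W obj @map0 :=
      { P := PUnit
        act := fun f _ => N0.act f
        act_id := fun X _ => N0.act_id X
        act_comp := fun f g _ => N0.act_comp f g
        act_pure := fun f hf _ => N0.act_pure f hf }
    obtain ⟨φ, hφ, -⟩ := hterm N
    refine ⟨φ PUnit.unit, ?_⟩
    cases N0 with
    | mk act0 h1 h2 h3 =>
      have hact : (fun {X Y : T} (f : X ⟶ Y) => MA.act f (φ PUnit.unit)) = @act0 := by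
        funext X Y f x
        exact congrFun (hφ f PUnit.unit) x
      simp only []
      congr 1
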